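/- Suppose 1 → G₁ → G → G₂ → 1 is an exact sequence of groups and G₂ has bounded finite subgroups (i.e., there is a constant C such that every finite subgroup of G₂ has order at most C). Then G is Jordan if and only if G₁ is Jordan. -/

import Mathlib

def HasBoundedFiniteSubgroups (Γ : Type*) [Group Γ] : Prop :=
  ∃ C : ℕ, ∀ H : Subgroup Γ, Finite H → Nat.card H ≤ C

def IsJordanGroup (Γ : Type*) [Group Γ] : Prop :=
  ∃ J : ℕ, ∀ H : Subgroup Γ, Finite H →
    ∃ A : Subgroup H, A.Normal ∧ (∀ a b : A, a * b = b * a) ∧ A.index ≤ J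

/-- Commutativity transfers along injective homomorphisms. -/
lemma comm_of_injective {X Y : Type*} [Group X] [Group Y] (φ : X →* Y)
    (hφ : Function.Injective φ) (h : ∀ a b : Y, a * b = b * a) :
    ∀ a b : X, a * b = b * a := fun a b => hφ (by simp only [map_mul]; exact h _ _)

/-- Transfer the Jordan package across a group isomorphism. -/
lemma jordan_package_transfer {X Y : Type*} [Group X] [Group Y] (e : X ≃* Y) {J : ℕ}
    (h : ∃ A : Subgroup X, A.Normal ∧ (∀ a b : A, a * b = b * a) ∧ A.index ≤ J) :
    ∃ A : Subgroup Y, A.Normal ∧ (∀ a b : A, a * b = b * a) ∧ A.index ≤ J := by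
  obtain ⟨A, hN, hab, hidx⟩ := h
  refine ⟨A.comap e.symm.toMonoidHom, hN.comap _, ?_, ?_⟩
  · intro a b
    have h2 := hab ⟨e.symm a, a.2⟩ ⟨e.symm b, b.2⟩
    have h3 : e.symm (a : Y) * e.symm (b : Y) = e.symm (b : Y) * e.symm (a : Y) :=
      congrArg Subtype.val h2
    ext
    apply e.symm.injective
    simpa only [Subgroup.coe_mul, map_mul] using h3
  · rwa [Subgroup.index_comap_of_surjective _ e.symm.surjective]

/-- Index bound for the normal core in a finite group. -/
lemma normalCore_index_le {X : Type*} [Group X] [Finite X] (B : Subgroup X) :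
    B.normalCore.index ≤ Nat.factorial B.index := by
  rw [Subgroup.normalCore_eq_ker, Subgroup.index_ker]
  calc Nat.card (MulAction.toPermHom X (X ⧸ B)).range
      ≤ Nat.card (Equiv.Perm (X ⧸ B)) :=
        Nat.card_le_card_of_injective _ Subtype.val_injective
    _ = Nat.factorial (Nat.card (X ⧸ B)) := by
        obtain ⟨i⟩ : Nonempty (Fintype (X ⧸ B)) := ⟨Fintype.ofFinite _⟩
        obtain ⟨d⟩ : Nonempty (DecidableEq (X ⧸ B)) := ⟨Classical.decEq _⟩
        rw [Nat.card_eq_fintype_card, Nat.card_eq_fintype_card, Fintype.card_perm]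
    _ = Nat.factorial B.index := by rw [Subgroup.index_eq_card]

theorem jordan_iff_of_exact {G₁ G G₂ : Type*} [Group G₁] [Group G] [Group G₂]
    (f : G₁ →* G) (g : G →* G₂) (hf : Function.Injective f)
    (hg : Function.Surjective g) (hexact : g.ker = f.range)
    (hbfs : HasBoundedFiniteSubgroups G₂) :
    IsJordanGroup G ↔ IsJordanGroup G₁ := by
  obtain ⟨C, hC⟩ := hbfs
  constructor
  · rintro ⟨J, hJ⟩
    refine ⟨J, fun H₁ hH₁ => ?_⟩
    haveI := hH₁
    let e : H₁ ≃* (H₁.map f) := H₁.equivMapOfInjective f hf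
    haveI : Finite (H₁.map f) := Finite.of_equiv _ e.toEquiv
    exact jordan_package_transfer e.symm (hJ (H₁.map f) inferInstance)
  · rintro ⟨J, hJ⟩
    refine ⟨Nat.factorial (J * C), fun H hH => ?_⟩
    haveI := hH
    -- K : kernel of g restricted to H
    let K : Subgroup H := (g.comp H.subtype).ker
    -- K maps into the range of f
    have hKrange : K.map H.subtype ≤ f.range := by
      rintro x ⟨k, hk, rfl⟩
      rw [← hexact]
      exact hk
    -- the corresponding subgroup of G₁
    let H₁ : Subgroup G₁ := (K.map H.subtype).comap f
    have hmap : H₁.map f = K.map H.subtype := Subgroup.map_comap_eq_self hKrange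
    let e1 : H₁ ≃* (H₁.map f) := H₁.equivMapOfInjective f hf
    let e2 : K ≃* (K.map H.subtype) := K.equivMapOfInjective H.subtype H.subtype_injective
    let e : H₁ ≃* K := e1.trans ((MulEquiv.subgroupCongr hmap).trans e2.symm)
    haveI : Finite K := Subtype.finite
    haveI : Finite H₁ := Finite.of_equiv _ e.symm.toEquiv
    obtain ⟨A, hAN, hAab, hAidx⟩ := jordan_package_transfer e (hJ H₁ inferInstance)
    -- push A into H
    let B : Subgroup H := A.map K.subtype
    -- index of K in H is bounded by C
    have hKidx : K.index ≤ C := by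
      rw [Subgroup.index_ker]
      refine hC _ ?_
      exact Finite.of_surjective _ (g.comp H.subtype).rangeRestrict_surjective
    -- index of B in H
    have hBidx : B.index ≤ J * C := by
      have : B.index = A.index * K.index := by
        rw [Subgroup.index_map, Subgroup.ker_subtype, sup_bot_eq, Subgroup.range_subtype]
      rw [this]
      exact Nat.mul_le_mul hAidx hKidx
    -- B is abelian
    let eB : A ≃* B := A.equivMapOfInjective K.subtype K.subtype_injective
    have hBab : ∀ a b : B, a * b = b * a :=
      comm_of_injective eB.symm.toMonoidHom eB.symm.injective hAab
    refine ⟨B.normalCore, Subgroup.normalCore_normal B, ?_, ?_⟩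
    · exact comm_of_injective (Subgroup.inclusion B.normalCore_le)
        (Subgroup.inclusion_injective _) hBab
    · calc B.normalCore.index ≤ Nat.factorial B.index := normalCore_index_le B
        _ ≤ Nat.factorial (J * C) := Nat.factorial_le hBidx
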